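/- Degree elevation of a Bézier curve with shifted knots: for every natural number n ≥ 1, real parameters α, β with 0 ≤ α ≤ β, control points P_0, …, P_n in ℝ^d (or any real vector space), and every real t, one has ∑_{k=0}^{n} P_k · G_{n,α,β}^k(t) = ∑_{k=0}^{n+1} P*_k · G̃_{n+1,α,β}^k(t), where P*_0 = P_0, P*_{n+1} = P_n, and P*_k = (k/(n+1)) · P_{k−1} + ((n+1−k)/(n+1)) · P_k for 1 ≤ k ≤ n. -/

import Mathlib

/-- Bernstein functions with shifted knots of degree `n`:
`G_{n,α,β}^k(t) = C(n,k) ((n+β)/n)^n (t - α/(n+β))^k ((n+α)/(n+β) - t)^(n-k)`. -/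
noncomputable def G (n : ℕ) (α β : ℝ) (k : ℕ) (t : ℝ) : ℝ :=
  (n.choose k : ℝ) * ((n + β) / n) ^ n * (t - α / (n + β)) ^ k *
    ((n + α) / (n + β) - t) ^ (n - k)

/-- Degree-(n+1) Bernstein functions on the same shifted interval:
`G̃_{n+1,α,β}^k(t) = C(n+1,k) ((n+β)/n)^(n+1) (t - α/(n+β))^k ((n+α)/(n+β) - t)^(n+1-k)`. -/
noncomputable def Gt (n : ℕ) (α β : ℝ) (k : ℕ) (t : ℝ) : ℝ :=
  ((n + 1).choose k : ℝ) * ((n + β) / n) ^ (n + 1) * (t - α / (n + β)) ^ k *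
    ((n + α) / (n + β) - t) ^ (n + 1 - k)

lemma alg (n j : ℕ) (c x y C0 C1 C w w' : ℝ)
    (e1 : (((j : ℝ) + 1) / w) * C1 = C) (e2 : (w' / w) * C0 = C)
    (hc : c * (x + y) = 1) :
    (((j : ℝ) + 1) / w) * (C1 * c ^ (n + 1) * x ^ (j + 1) * y ^ (n - j))
      + (w' / w) * (C0 * c ^ (n + 1) * x ^ j * y ^ ((n - j) + 1))
      = C * c ^ n * x ^ j * y ^ (n - j) := by
  linear_combination (c ^ (n + 1) * x ^ (j + 1) * y ^ (n - j)) * e1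
    + (c ^ (n + 1) * x ^ j * y ^ ((n - j) + 1)) * e2
    + (C * c ^ n * x ^ j * y ^ (n - j)) * hc

lemma key (n j : ℕ) (hn : 1 ≤ n) (α β : ℝ) (hβ : 0 ≤ β) (hj : j ≤ n) (t : ℝ) :
    (((j : ℝ) + 1) / ((n : ℝ) + 1)) * Gt n α β (j + 1) t
      + ((((n : ℝ) + 1) - (j : ℝ)) / ((n : ℝ) + 1)) * Gt n α β j t = G n α β j t := by
  have hn0 : (n : ℝ) ≠ 0 := by positivity
  have hnβ : (n : ℝ) + β ≠ 0 := by positivity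
  have hN : ((n : ℝ) + 1) ≠ 0 := by positivity
  have h1 : n + 1 - (j + 1) = n - j := by omega
  have h2 : n + 1 - j = (n - j) + 1 := by omega
  have hb1 : ((n + 1).choose (j + 1) : ℝ) * ((j : ℝ) + 1) = ((n : ℝ) + 1) * (n.choose j) := by
    exact_mod_cast congrArg Nat.cast (Nat.add_one_mul_choose_eq n j).symm
  have hb2 : ((n + 1).choose j : ℝ) * (((n : ℝ) + 1) - (j : ℝ)) = ((n : ℝ) + 1) * (n.choose j) := by
    have h := Nat.choose_mul_succ_eq n j
    have h' : ((n + 1).choose j : ℝ) * (((n + 1 - j : ℕ) : ℝ)) = (n.choose j : ℝ) * (n + 1) := by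
      exact_mod_cast congrArg Nat.cast h.symm
    rw [Nat.cast_sub (by omega)] at h'
    push_cast at h' ⊢
    linarith
  have e1 : (((j : ℝ) + 1) / ((n : ℝ) + 1)) * ((n + 1).choose (j + 1) : ℝ)
      = (n.choose j : ℝ) := by
    field_simp
    linarith
  have e2 : (((((n : ℝ) + 1) - (j : ℝ))) / ((n : ℝ) + 1)) * ((n + 1).choose j : ℝ)
      = (n.choose j : ℝ) := by
    field_simp
    linarith
  have hc : (((n : ℝ) + β) / n) * ((t - α / (n + β)) + (((n : ℝ) + α) / (n + β) - t)) = 1 := by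
    field_simp
    ring
  unfold G Gt
  rw [h1, h2]
  exact alg n j _ _ _ _ _ _ _ _ e1 e2 hc

/-- Degree elevation of a Bézier curve with shifted knots. -/
theorem bezier_degree_elevation (n : ℕ) (hn : 1 ≤ n) (α β : ℝ) (hα : 0 ≤ α) (hαβ : α ≤ β)
    {E : Type*} [AddCommGroup E] [Module ℝ E] (P Q : ℕ → E)
    (hQ0 : Q 0 = P 0) (hQtop : Q (n + 1) = P n)
    (hQ : ∀ k, 1 ≤ k → k ≤ n →
      Q k = ((k : ℝ) / (n + 1)) • P (k - 1) + (((n : ℝ) + 1 - k) / (n + 1)) • P k)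
    (t : ℝ) :
    ∑ k ∈ Finset.range (n + 1), G n α β k t • P k
      = ∑ k ∈ Finset.range (n + 2), Gt n α β k t • Q k := by
  have hβ : 0 ≤ β := le_trans hα hαβ
  have hN : ((n : ℝ) + 1) ≠ 0 := by positivity
  -- rewrite the RHS termwise
  have step : ∀ k ∈ Finset.range (n + 2),
      Gt n α β k t • Q k
        = (((k : ℝ) / ((n : ℝ) + 1)) * Gt n α β k t) • P (k - 1)
          + (((((n : ℝ) + 1) - (k : ℝ)) / ((n : ℝ) + 1)) * Gt n α β k t) • P k := by
    intro k hk
    rcases Nat.eq_zero_or_pos k with rfl | hk1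
    · simp [hQ0, div_self hN]
    rcases eq_or_lt_of_le (show k ≤ n + 1 by simp at hk; omega) with rfl | hk2
    · have : (((n : ℝ) + 1) - ((n + 1 : ℕ) : ℝ)) = 0 := by push_cast; ring
      rw [this, hQtop]
      have h1 : (((n + 1 : ℕ) : ℝ) / ((n : ℝ) + 1)) = 1 := by
        push_cast; exact div_self hN
      simp [h1, div_self hN]
    · rw [hQ k hk1 (by omega), smul_add, smul_smul, smul_smul]
      ring_nf
  rw [Finset.sum_congr rfl step, Finset.sum_add_distrib]
  rw [Finset.sum_range_succ' (fun k => (((k : ℝ) / ((n : ℝ) + 1)) * Gt n α β k t) • P (k - 1)) (n + 1)]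
  rw [Finset.sum_range_succ (fun k => (((((n : ℝ) + 1) - (k : ℝ)) / ((n : ℝ) + 1)) * Gt n α β k t) • P k) (n + 1)]
  have z1 : ((((0 : ℕ) : ℝ) / ((n : ℝ) + 1)) * Gt n α β 0 t) • P (0 - 1) = 0 := by simp
  have z2 : (((((n : ℝ) + 1) - (((n + 1 : ℕ)) : ℝ)) / ((n : ℝ) + 1)) * Gt n α β (n + 1) t) • P (n + 1)
      = 0 := by
    have : (((n : ℝ) + 1) - ((n + 1 : ℕ) : ℝ)) = 0 := by push_cast; ring
    simp [this]
  rw [z1, z2, add_zero, add_zero, ← Finset.sum_add_distrib]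
  refine (Finset.sum_congr rfl fun j hj => ?_).symm
  have hjn : j ≤ n := by simpa [Nat.lt_succ_iff] using hj
  have hcast : (((j + 1 : ℕ)) : ℝ) = (j : ℝ) + 1 := by push_cast; ring
  rw [hcast]
  simp only [Nat.add_sub_cancel]
  rw [← add_smul, key n j hn α β hβ hjn t]
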